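/- Let G be a group acting on a tree T with infinite cyclic vertex stabilizers and edge stabilizers of finite index in the stabilizers of their endpoint vertices (e.g., G a generalised Baumslag–Solitar group acting on its Bass–Serre tree with infinite cyclic vertex and edge stabilizers). Fix a vertex v with stabilizer ⟨a⟩ ≅ ℤ. If B ≤ G is a subgroup that is not free, then B ∩ ⟨a⟩ ≠ {1}. -/

import Mathlib

open MulAction CategoryTheory Classical

lemma aux_inford {G : Type*} [Group G] {x c : G} (hx : ¬IsOfFinOrder x)
    (hc : c ∈ Subgroup.zpowers x) (hc1 : c ≠ 1) : ¬IsOfFinOrder c := by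
  obtain ⟨m, rfl⟩ := hc
  have hinj : Function.Injective (x ^ · : ℤ → G) :=
    injective_zpow_iff_not_isOfFinOrder.2 hx
  intro hfin
  obtain ⟨n, hn, hpow⟩ := isOfFinOrder_iff_pow_eq_one.1 hfin
  have : x ^ (m * (n : ℤ)) = x ^ (0 : ℤ) := by
    rw [zpow_mul, zpow_natCast, hpow, zpow_zero]
  have := hinj this
  have hm : m ≠ 0 := by rintro rfl; simp at hc1
  have hn' : (n : ℤ) ≠ 0 := by exact_mod_cast hn.ne'
  exact (mul_ne_zero hm hn') this

-- Part 1: propagate a nontrivial elliptic element along a walk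
lemma aux_walk {V G : Type*} [Group G] [MulAction G V] (T : SimpleGraph V)
    (hvert : ∀ u : V, ∃ x : G, ¬IsOfFinOrder x ∧ stabilizer G u = Subgroup.zpowers x)
    (hedge : ∀ u w : V, T.Adj u w →
      (stabilizer G u ⊓ stabilizer G w).relIndex (stabilizer G u) ≠ 0 ∧
      (stabilizer G u ⊓ stabilizer G w).relIndex (stabilizer G w) ≠ 0)
    (B : Subgroup G) :
    ∀ {u w : V} (_ : T.Walk u w) (c : G), c ∈ B → c ∈ stabilizer G u → c ≠ 1 →
      ∃ d : G, d ∈ B ∧ d ∈ stabilizer G w ∧ d ≠ 1 := by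
  intro u w p
  induction p with
  | nil => exact fun c hB hs hne => ⟨c, hB, hs, hne⟩
  | @cons u u' w h p ih =>
    intro c hB hs hne
    obtain ⟨x, hx, hxs⟩ := hvert u
    have hinford : ¬IsOfFinOrder c := aux_inford hx (hxs ▸ hs) hne
    obtain ⟨n, hn, _, hmem⟩ :=
      Subgroup.exists_pow_mem_of_relIndex_ne_zero (hedge u u' h).1 hs
    refine ih (c ^ n) (pow_mem hB n) (hmem.1.2) ?_
    intro h1
    exact hinford (isOfFinOrder_iff_pow_eq_one.2 ⟨n, hn, h1⟩)

namespace TreeFree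

variable {V : Type*} {Γ : Type*} [Group Γ] [MulAction Γ V]

/-- the translating element -/
noncomputable def δ (u w : V) : Γ :=
  if h : ∃ b : Γ, b • w = u then h.choose else 1

lemma δ_spec {u w : V} (h : ∃ b : Γ, b • w = u) : (δ u w : Γ) • w = u := by
  rw [δ, dif_pos h]; exact h.choose_spec

variable (hfree : ∀ (u : V) (g : Γ), g • u = u → g = 1)
include hfree

lemma smul_cancel {u : V} {b b' : Γ} (h : b • u = b' • u) : b = b' := by
  have h1 : (b'⁻¹ * b) • u = u := by rw [mul_smul, h, inv_smul_smul]
  have h2 := hfree u _ h1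
  rwa [inv_mul_eq_one, eq_comm] at h2

lemma δ_eq {u w : V} {b : Γ} (h : b • w = u) : (δ u w : Γ) = b :=
  smul_cancel hfree (by rw [δ_spec ⟨b, h⟩, h])

lemma δ_same (u : V) : (δ u u : Γ) = 1 := δ_eq hfree (one_smul _ _)

lemma δ_smul {w : V} (b : Γ) : (δ (b • w) w : Γ) = b := δ_eq hfree rfl

lemma δ_mul {u w z : V} (h₁ : ∃ b : Γ, b • w = u) (h₂ : ∃ b : Γ, b • z = w) :
    (δ u w * δ w z : Γ) = δ u z :=
  (δ_eq hfree (by rw [mul_smul, δ_spec h₂, δ_spec h₁])).symm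

lemma δ_shift {u w : V} (b : Γ) (h : ∃ c : Γ, c • w = u) :
    (δ (b • u) w : Γ) = b * δ u w :=
  δ_eq hfree (by rw [mul_smul, δ_spec h])

omit hfree

/-- orbit space -/
noncomputable abbrev Ob (Γ V : Type*) [Group Γ] [MulAction Γ V] :=
  Quotient (MulAction.orbitRel Γ V)

noncomputable def mk (u : V) : Ob Γ V := Quotient.mk _ u

lemma mk_out (x : Ob Γ V) : mk (x.out) = x := Quotient.out_eq x

lemma mk_smul (b : Γ) (u : V) : mk (b • u) = (mk u : Ob Γ V) :=
  Quotient.sound (MulAction.mem_orbit u b)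

lemma exists_smul_of_mk_eq {u w : V} (h : (mk u : Ob Γ V) = mk w) :
    ∃ b : Γ, b • w = u :=
  MulAction.mem_orbit_iff.1 (Quotient.exact h)

lemma exists_out {x : Ob Γ V} {u : V} (h : mk u = x) : ∃ b : Γ, b • x.out = u :=
  exists_smul_of_mk_eq (by rw [h, mk_out])

end TreeFree

namespace TreeFree

variable {V : Type*} {Γ : Type*} [Group Γ] [MulAction Γ V] {T : SimpleGraph V}

/-- oriented edges -/
def Ed (T : SimpleGraph V) : Type _ := {p : V × V // T.Adj p.1 p.2}

def Ed.swap (E : Ed T) : Ed T := ⟨(E.1.2, E.1.1), E.2.symm⟩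

/-- equivalence: same Γ-orbit as unoriented edges -/
def edRel (Γ : Type*) [Group Γ] [MulAction Γ V] (E F : Ed T) : Prop :=
  ∃ b : Γ, (b • E.1.1 = F.1.1 ∧ b • E.1.2 = F.1.2) ∨ (b • E.1.1 = F.1.2 ∧ b • E.1.2 = F.1.1)

lemma edRel_refl (E : Ed T) : edRel Γ E E := ⟨1, Or.inl ⟨one_smul _ _, one_smul _ _⟩⟩

lemma edRel_symm {E F : Ed T} : edRel Γ E F → edRel Γ F E := by
  rintro ⟨b, (⟨h1, h2⟩ | ⟨h1, h2⟩)⟩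
  · exact ⟨b⁻¹, Or.inl ⟨by rw [← h1, inv_smul_smul], by rw [← h2, inv_smul_smul]⟩⟩
  · exact ⟨b⁻¹, Or.inr ⟨by rw [← h2, inv_smul_smul], by rw [← h1, inv_smul_smul]⟩⟩

lemma edRel_trans {E F K : Ed T} : edRel Γ E F → edRel Γ F K → edRel Γ E K := by
  rintro ⟨b, (⟨h1, h2⟩ | ⟨h1, h2⟩)⟩ ⟨c, (⟨g1, g2⟩ | ⟨g1, g2⟩)⟩
  · exact ⟨c * b, Or.inl ⟨by rw [mul_smul, h1, g1], by rw [mul_smul, h2, g2]⟩⟩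
  · exact ⟨c * b, Or.inr ⟨by rw [mul_smul, h1, g1], by rw [mul_smul, h2, g2]⟩⟩
  · exact ⟨c * b, Or.inr ⟨by rw [mul_smul, h1, g2], by rw [mul_smul, h2, g1]⟩⟩
  · exact ⟨c * b, Or.inl ⟨by rw [mul_smul, h1, g2], by rw [mul_smul, h2, g1]⟩⟩

def edSetoid (Γ : Type*) [Group Γ] [MulAction Γ V] (T : SimpleGraph V) : Setoid (Ed T) :=
  ⟨edRel Γ, edRel_refl, edRel_symm, edRel_trans⟩

noncomputable abbrev EC (Γ : Type*) [Group Γ] [MulAction Γ V] (T : SimpleGraph V) :=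
  Quotient (edSetoid Γ T)

noncomputable def emk (E : Ed T) : EC Γ T := Quotient.mk _ E

/-- the chosen representative of the unoriented edge orbit of `E` -/
noncomputable def rep (E : Ed T) : Ed T := (emk (Γ := Γ) E).out

lemma rep_rel (E : Ed T) : edRel Γ (rep (Γ := Γ) E) E :=
  Quotient.exact (Quotient.out_eq (emk E))

lemma rep_congr {E F : Ed T} (h : edRel Γ E F) : rep (Γ := Γ) E = rep (Γ := Γ) F := by
  unfold rep emk
  rw [Quotient.sound h]

lemma rep_swap (E : Ed T) : rep (Γ := Γ) E.swap = rep (Γ := Γ) E :=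
  rep_congr ⟨1, Or.inr ⟨one_smul _ _, one_smul _ _⟩⟩

/-- positively oriented: the representative maps onto `E` preserving orientation -/
def Pos (Γ : Type*) [Group Γ] [MulAction Γ V] (E : Ed T) : Prop :=
  ∃ b : Γ, b • (rep (Γ := Γ) E).1.1 = E.1.1 ∧ b • (rep (Γ := Γ) E).1.2 = E.1.2

lemma pos_or_swap (E : Ed T) : Pos Γ E ∨ Pos Γ E.swap := by
  rcases rep_rel (Γ := Γ) E with ⟨b, (h | h)⟩
  · exact Or.inl ⟨b, h⟩
  · refine Or.inr ⟨b, ?_⟩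
    rw [rep_swap]
    exact ⟨h.1, h.2⟩

section NoInv
variable (hnoinv : ∀ (g : Γ) (u w : V), T.Adj u w → ¬(g • u = w ∧ g • w = u))
include hnoinv

lemma not_pos_both (E : Ed T) : ¬(Pos Γ E ∧ Pos Γ E.swap) := by
  rintro ⟨⟨b, hb1, hb2⟩, ⟨c, hc1, hc2⟩⟩
  rw [rep_swap] at hc1 hc2
  refine hnoinv (c * b⁻¹) E.1.1 E.1.2 E.2 ⟨?_, ?_⟩
  · rw [mul_smul, ← hb1, inv_smul_smul, hc1]; rfl
  · rw [mul_smul, ← hb2, inv_smul_smul, hc2]; rfl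

lemma pos_swap_iff (E : Ed T) : Pos Γ E.swap ↔ ¬Pos Γ E := by
  constructor
  · intro h h'
    exact not_pos_both hnoinv E ⟨h', h⟩
  · intro h
    rcases pos_or_swap (Γ := Γ) E with h' | h'
    · exact absurd h' h
    · exact h'

end NoInv

/-- selected: `E` is the chosen representative of its class -/
def Sel (Γ : Type*) [Group Γ] [MulAction Γ V] (E : Ed T) : Prop := rep (Γ := Γ) E = E

lemma sel_rep (E : Ed T) : Sel Γ (rep (Γ := Γ) E) := by
  unfold Sel
  exact rep_congr (rep_rel E)

lemma pos_of_sel {E : Ed T} (h : Sel Γ E) : Pos Γ E :=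
  ⟨1, by rw [h, one_smul], by rw [h, one_smul]⟩

section Smul
variable (hadj : ∀ (g : Γ) (u w : V), T.Adj u w → T.Adj (g • u) (g • w))

def esmul (b : Γ) (E : Ed T) : Ed T := ⟨(b • E.1.1, b • E.1.2), hadj b _ _ E.2⟩

lemma rep_esmul (b : Γ) (E : Ed T) : rep (Γ := Γ) (esmul hadj b E) = rep (Γ := Γ) E :=
  (rep_congr ⟨b, Or.inl ⟨rfl, rfl⟩⟩).symm

lemma pos_esmul (b : Γ) (E : Ed T) : Pos Γ (esmul hadj b E) ↔ Pos Γ E := by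
  unfold Pos
  rw [rep_esmul]
  constructor
  · rintro ⟨c, h1, h2⟩
    refine ⟨b⁻¹ * c, ?_, ?_⟩
    · rw [mul_smul, h1]; exact inv_smul_eq_iff.2 rfl
    · rw [mul_smul, h2]; exact inv_smul_eq_iff.2 rfl
  · rintro ⟨c, h1, h2⟩
    exact ⟨b * c, by rw [mul_smul, h1]; rfl, by rw [mul_smul, h2]; rfl⟩

end Smul

end TreeFree

namespace TreeFree

variable {V : Type*} {Γ : Type*} [Group Γ] [MulAction Γ V] {T : SimpleGraph V}

/-- morphisms of the quotient groupoid: `Mor x y` is "points of the orbit `y`",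
thought of as the pair `(x.out, w)` up to translation. -/
def Mor (_x y : Ob Γ V) : Type _ := {w : V // (mk w : Ob Γ V) = y}

noncomputable def mid (x : Ob Γ V) : Mor x x := ⟨x.out, mk_out x⟩

noncomputable def mcomp {x y z : Ob Γ V} (α : Mor x y) (β : Mor y z) : Mor x z :=
  ⟨(δ α.1 y.out : Γ) • β.1, by rw [mk_smul]; exact β.2⟩

noncomputable def minv {x y : Ob Γ V} (α : Mor x y) : Mor y x :=
  ⟨(δ α.1 y.out : Γ)⁻¹ • x.out, by rw [mk_smul, mk_out]⟩

variable (hfree : ∀ (u : V) (g : Γ), g • u = u → g = 1)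
include hfree

lemma mcomp_assoc {x y z t : Ob Γ V} (α : Mor x y) (β : Mor y z) (γ : Mor z t) :
    mcomp (mcomp α β) γ = mcomp α (mcomp β γ) := by
  apply Subtype.ext
  show (δ ((δ α.1 y.out : Γ) • β.1) z.out : Γ) • γ.1
      = (δ α.1 y.out : Γ) • ((δ β.1 z.out : Γ) • γ.1)
  rw [δ_shift hfree _ (exists_out β.2), mul_smul]

lemma mid_comp {x y : Ob Γ V} (β : Mor x y) : mcomp (mid x) β = β := by
  apply Subtype.ext
  show (δ x.out x.out : Γ) • β.1 = β.1
  rw [δ_same hfree, one_smul]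

lemma comp_mid {x y : Ob Γ V} (α : Mor x y) : mcomp α (mid y) = α := by
  apply Subtype.ext
  show (δ α.1 y.out : Γ) • y.out = α.1
  exact δ_spec (exists_out α.2)

lemma minv_comp {x y : Ob Γ V} (α : Mor x y) : mcomp (minv α) α = mid y := by
  apply Subtype.ext
  show (δ ((δ α.1 y.out : Γ)⁻¹ • x.out) x.out : Γ) • α.1 = y.out
  rw [δ_smul hfree, inv_smul_eq_iff, δ_spec (exists_out α.2)]

lemma comp_minv {x y : Ob Γ V} (α : Mor x y) : mcomp α (minv α) = mid x := by
  apply Subtype.ext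
  show (δ α.1 y.out : Γ) • ((δ α.1 y.out : Γ)⁻¹ • x.out) = x.out
  rw [smul_inv_smul]

/-- the quotient groupoid structure -/
noncomputable def gpd : Groupoid (Ob Γ V) where
  Hom := Mor
  id := mid
  comp := mcomp
  id_comp := mid_comp hfree
  comp_id := comp_mid hfree
  assoc := mcomp_assoc hfree
  inv := minv
  inv_comp := minv_comp hfree
  comp_inv := comp_minv hfree

omit hfree

/-- normalized morphism attached to an ordered pair of vertices -/
noncomputable def mor (u w : V) {x y : Ob Γ V} (_hx : mk u = x) (hy : mk w = y) :
    Mor x y := ⟨(δ x.out u : Γ) • w, by rw [mk_smul]; exact hy⟩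

include hfree

lemma mor_self {u : V} {x : Ob Γ V} (hx : mk u = x) (hx' : mk u = x) :
    mor u u hx hx' = mid x := by
  apply Subtype.ext
  show (δ x.out u : Γ) • u = x.out
  exact δ_spec (exists_smul_of_mk_eq (by rw [mk_out, hx]))

lemma mor_eq_self {x y : Ob Γ V} (α : Mor x y) : mor x.out α.1 (mk_out x) α.2 = α := by
  apply Subtype.ext
  show (δ x.out x.out : Γ) • α.1 = α.1
  rw [δ_same hfree, one_smul]

lemma mor_comp {u u' w : V} {x y z : Ob Γ V} (hx : mk u = x) (hy : mk u' = y)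
    (hz : mk w = z) :
    mcomp (mor u u' hx hy) (mor u' w hy hz) = mor u w hx hz := by
  apply Subtype.ext
  show (δ ((δ x.out u : Γ) • u') y.out : Γ) • ((δ y.out u' : Γ) • w)
      = (δ x.out u : Γ) • w
  rw [δ_shift hfree _ (exists_out hy), mul_smul, ← mul_smul (δ u' y.out : Γ),
    δ_mul hfree (exists_out hy) (exists_smul_of_mk_eq (by rw [mk_out, hy])),
    δ_same hfree, one_smul]

end TreeFree

namespace TreeFree

variable {V : Type*} {Γ : Type*} [Group Γ] [MulAction Γ V] {T : SimpleGraph V}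
variable {X : Type*} [Group X]

/-- edge cocycle induced by a labelling of representative edges -/
noncomputable def cc (lab : Ed T → X) (E : Ed T) : X :=
  if Pos Γ E then lab (rep (Γ := Γ) E) else (lab (rep (Γ := Γ) E))⁻¹

lemma cc_sel (lab : Ed T → X) {E : Ed T} (h : Sel Γ E) : cc (Γ := Γ) lab E = lab E := by
  rw [cc, if_pos (pos_of_sel h), h]

lemma cc_swap (hnoinv : ∀ (g : Γ) (u w : V), T.Adj u w → ¬(g • u = w ∧ g • w = u))
    (lab : Ed T → X) (E : Ed T) : cc (Γ := Γ) lab E.swap = (cc (Γ := Γ) lab E)⁻¹ := by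
  rw [cc, cc, rep_swap]
  by_cases h : Pos Γ E
  · rw [if_neg ((not_not.2 h).imp (pos_swap_iff hnoinv E).1), if_pos h]
  · rw [if_pos ((pos_swap_iff hnoinv E).2 h), if_neg h, inv_inv]

lemma cc_esmul (hadj : ∀ (g : Γ) (u w : V), T.Adj u w → T.Adj (g • u) (g • w))
    (lab : Ed T → X) (b : Γ) (E : Ed T) :
    cc (Γ := Γ) lab (esmul hadj b E) = cc (Γ := Γ) lab E := by
  rw [cc, cc, rep_esmul]
  by_cases h : Pos Γ E
  · rw [if_pos ((pos_esmul hadj b E).2 h), if_pos h]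
  · rw [if_neg (fun h' => h ((pos_esmul hadj b E).1 h')), if_neg h]

/-- product of the cocycle along a walk (in reverse order) -/
noncomputable def valW (lab : Ed T → X) : ∀ {u w : V}, T.Walk u w → X
  | _, _, SimpleGraph.Walk.nil => 1
  | _, _, SimpleGraph.Walk.cons h p => valW lab p * cc (Γ := Γ) lab ⟨(_, _), h⟩

lemma valW_append (lab : Ed T → X) {u w z : V} (p : T.Walk u w) (q : T.Walk w z) :
    valW (Γ := Γ) lab (p.append q) = valW (Γ := Γ) lab q * valW (Γ := Γ) lab p := by
  induction p with
  | nil => simp [valW]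
  | cons h p ih =>
    rw [SimpleGraph.Walk.cons_append]
    show valW lab (p.append q) * _ = _
    rw [ih, valW, mul_assoc]

variable (hT : T.IsTree)

/-- the geodesic -/
noncomputable def geod (u w : V) : T.Walk u w := (hT.existsUnique_path u w).choose

lemma geod_isPath (u w : V) : (geod hT u w).IsPath :=
  (hT.existsUnique_path u w).choose_spec.1

lemma geod_eq {u w : V} (p : T.Walk u w) (hp : p.IsPath) : p = geod hT u w :=
  (hT.existsUnique_path u w).choose_spec.2 p hp

/-- product of the cocycle along the geodesic -/
noncomputable def val (lab : Ed T → X) (u w : V) : X :=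
  valW (Γ := Γ) lab (geod hT u w)

lemma val_refl (lab : Ed T → X) (u : V) : val (Γ := Γ) hT lab u u = 1 := by
  rw [val, ← geod_eq hT SimpleGraph.Walk.nil SimpleGraph.Walk.IsPath.nil]
  rfl

lemma val_adj (lab : Ed T → X) {u w : V} (h : T.Adj u w) :
    val (Γ := Γ) hT lab u w = cc (Γ := Γ) lab ⟨(u, w), h⟩ := by
  have hp : (SimpleGraph.Walk.cons h SimpleGraph.Walk.nil).IsPath := by
    simp [SimpleGraph.Walk.isPath_def, h.ne]
  rw [val, ← geod_eq hT _ hp, valW, valW, one_mul]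

lemma val_cons (hnoinv : ∀ (g : Γ) (u w : V), T.Adj u w → ¬(g • u = w ∧ g • w = u))
    (lab : Ed T → X) {u u' : V} (h : T.Adj u u') (z : V) :
    val (Γ := Γ) hT lab u z
      = val (Γ := Γ) hT lab u' z * cc (Γ := Γ) lab ⟨(u, u'), h⟩ := by
  by_cases hm : u' ∈ (geod hT u z).support
  · have hq := geod_isPath hT u z
    have htake : (geod hT u z).takeUntil u' hm = SimpleGraph.Walk.cons h SimpleGraph.Walk.nil := by
      rw [geod_eq hT _ (hq.takeUntil hm)]
      refine (geod_eq hT _ ?_).symm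
      simp [SimpleGraph.Walk.isPath_def, h.ne]
    have hdrop : (geod hT u z).dropUntil u' hm = geod hT u' z :=
      geod_eq hT _ (hq.dropUntil hm)
    conv_lhs => rw [val, ← SimpleGraph.Walk.take_spec (geod hT u z) hm]
    rw [valW_append, htake, hdrop]
    show _ = _
    rw [valW, valW, one_mul]
    rfl
  · have hp : (SimpleGraph.Walk.cons h.symm (geod hT u z)).IsPath :=
      (geod_isPath hT u z).cons hm
    have : val (Γ := Γ) hT lab u' z
        = val (Γ := Γ) hT lab u z * cc (Γ := Γ) lab ⟨(u', u), h.symm⟩ := by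
      rw [val, ← geod_eq hT _ hp]
      rfl
    have hsw : (⟨(u', u), h.symm⟩ : Ed T) = Ed.swap ⟨(u, u'), h⟩ := rfl
    erw [this, hsw, cc_swap hnoinv, mul_assoc, inv_mul_cancel, mul_one]

lemma val_walk (hnoinv : ∀ (g : Γ) (u w : V), T.Adj u w → ¬(g • u = w ∧ g • w = u))
    (lab : Ed T → X) {u w : V} (p : T.Walk u w) (z : V) :
    val (Γ := Γ) hT lab u z = val (Γ := Γ) hT lab w z * valW (Γ := Γ) lab p := by
  induction p with
  | nil => rw [valW, mul_one]
  | cons h p ih =>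
    rw [val_cons hT hnoinv lab h z, ih, valW, mul_assoc]

lemma val_comp (hnoinv : ∀ (g : Γ) (u w : V), T.Adj u w → ¬(g • u = w ∧ g • w = u))
    (lab : Ed T → X) (u w z : V) :
    val (Γ := Γ) hT lab u z = val (Γ := Γ) hT lab w z * val (Γ := Γ) hT lab u w :=
  val_walk hT hnoinv lab (geod hT u w) z

/-- the action by a group element as a graph homomorphism -/
def actHom (hadj : ∀ (g : Γ) (u w : V), T.Adj u w → T.Adj (g • u) (g • w)) (b : Γ) :
    T →g T := ⟨fun u => b • u, fun {u w} h => hadj b u w h⟩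

lemma valW_map (hadj : ∀ (g : Γ) (u w : V), T.Adj u w → T.Adj (g • u) (g • w))
    (lab : Ed T → X) (b : Γ) {u w : V} (p : T.Walk u w) :
    valW (Γ := Γ) lab (p.map (actHom hadj b)) = valW (Γ := Γ) lab p := by
  induction p with
  | nil => rfl
  | cons h p ih =>
    rw [SimpleGraph.Walk.map_cons, valW, valW, ih]
    congr 1
    exact cc_esmul hadj lab b ⟨(_, _), h⟩

lemma val_smul (hadj : ∀ (g : Γ) (u w : V), T.Adj u w → T.Adj (g • u) (g • w))
    (lab : Ed T → X) (b : Γ) (u w : V) :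
    val (Γ := Γ) hT lab (b • u) (b • w) = val (Γ := Γ) hT lab u w := by
  have hmap : ((geod hT u w).map (actHom hadj b)).IsPath :=
    SimpleGraph.Walk.map_isPath_of_injective (MulAction.injective b) (geod_isPath hT u w)
  have h2 : (geod hT u w).map (actHom hadj b) = geod hT (b • u) (b • w) :=
    geod_eq (u := b • u) (w := b • w) hT _ hmap
  rw [val, val, ← h2]; exact valW_map hadj lab b (geod hT u w)

end TreeFree

namespace TreeFree

variable {V : Type*} {Γ : Type*} [Group Γ] [MulAction Γ V] {T : SimpleGraph V}

/-- generating arrows of the quotient groupoid: selected representative edges -/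
def Arr (Γ : Type*) [Group Γ] [MulAction Γ V] (T : SimpleGraph V) (x y : Ob Γ V) : Type _ :=
  {E : Ed T // Sel Γ E ∧ (mk E.1.1 : Ob Γ V) = x ∧ (mk E.1.2 : Ob Γ V) = y}

noncomputable def ofArr {x y : Ob Γ V} (e : Arr Γ T x y) : Mor x y :=
  ⟨(δ x.out e.1.1.1 : Γ) • e.1.1.2, by rw [mk_smul]; exact e.2.2.2⟩

variable (hfree : ∀ (u : V) (g : Γ), g • u = u → g = 1)
include hfree

lemma mor_eq_ofArr {x y : Ob Γ V} {R : Ed T} (hsel : Sel Γ R) {b : Γ} {u u' : V}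
    (hb1 : b • R.1.1 = u) (hb2 : b • R.1.2 = u')
    (hx : mk u = x) (hy : mk u' = y)
    (h1 : (mk R.1.1 : Ob Γ V) = x) (h2 : (mk R.1.2 : Ob Γ V) = y) :
    mor u u' hx hy = ofArr ⟨R, hsel, h1, h2⟩ := by
  subst hb1; subst hb2
  apply Subtype.ext
  show (δ x.out (b • R.1.1) : Γ) • (b • R.1.2) = (δ x.out R.1.1 : Γ) • R.1.2
  rw [← mul_smul]
  congr 1
  symm
  apply δ_eq hfree
  rw [mul_smul]
  exact δ_spec (exists_smul_of_mk_eq (by rw [mk_out, hx]))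

lemma ofArr_comp_mor {x y : Ob Γ V} {R : Ed T} (hsel : Sel Γ R) {b : Γ} {u u' : V}
    (hb1 : b • R.1.1 = u') (hb2 : b • R.1.2 = u)
    (hu : mk u = x) (hu' : mk u' = y)
    (h1 : (mk R.1.1 : Ob Γ V) = y) (h2 : (mk R.1.2 : Ob Γ V) = x) :
    mcomp (ofArr ⟨R, hsel, h1, h2⟩) (mor u u' hu hu') = mid y := by
  subst hb1; subst hb2
  apply Subtype.ext
  show (δ ((δ y.out R.1.1 : Γ) • R.1.2) x.out : Γ) • ((δ x.out (b • R.1.2) : Γ) • (b • R.1.1))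
      = y.out
  rw [δ_shift hfree _ (exists_out h2), mul_smul,
    ← mul_smul (δ R.1.2 x.out : Γ) (δ x.out (b • R.1.2) : Γ),
    δ_mul hfree (exists_out h2) (exists_smul_of_mk_eq (by rw [mk_out, hu])),
    δ_eq hfree (b := b⁻¹) (inv_smul_smul b R.1.2), inv_smul_smul]
  exact δ_spec (exists_smul_of_mk_eq (by rw [mk_out, h1]))

end TreeFree

open TreeFree in
theorem isFreeGroup_of_free_action {V Γ : Type*} [Group Γ] [MulAction Γ V]
    (T : SimpleGraph V) (hT : T.IsTree)
    (hadj : ∀ (g : Γ) (u w : V), T.Adj u w → T.Adj (g • u) (g • w))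
    (hnoinv : ∀ (g : Γ) (u w : V), T.Adj u w → ¬(g • u = w ∧ g • w = u))
    (hfree : ∀ (u : V) (g : Γ), g • u = u → g = 1) : IsFreeGroup Γ := by
  classical
  letI instG : Groupoid (Ob Γ V) := gpd hfree
  letI instQ : Quiver (IsFreeGroupoid.Generators (Ob Γ V)) := ⟨fun x y => Arr Γ T x y⟩
  haveI instFreeGpd : IsFreeGroupoid (Ob Γ V) := by
    refine ⟨instQ, fun {a b} e => ofArr e, ?_⟩
    intro X _ f
    let lab : Ed T → X := fun R =>
      if hs : Sel Γ R then f (show Arr Γ T (mk R.1.1) (mk R.1.2) from ⟨R, hs, rfl, rfl⟩) else 1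
    have hlab : ∀ {x y : Ob Γ V} (E : Ed T) (hsel : Sel Γ E) (h1 : mk E.1.1 = x)
        (h2 : mk E.1.2 = y), f (show Arr Γ T x y from ⟨E, hsel, h1, h2⟩) = lab E := by
      intro x y E hsel h1 h2
      subst h1; subst h2
      simp only [lab]
      rw [dif_pos hsel]
    let F : (Ob Γ V) ⥤ SingleObj X :=
      { obj := fun _ => (),
        map := fun {x y} α => val (Γ := Γ) hT lab x.out α.1,
        map_id := fun x => val_refl (Γ := Γ) hT lab x.out,
        map_comp := by
          intro x y z α β
          show val (Γ := Γ) hT lab x.out ((δ α.1 y.out : Γ) • β.1)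
              = val (Γ := Γ) hT lab y.out β.1 * val (Γ := Γ) hT lab x.out α.1
          rw [val_comp (Γ := Γ) hT hnoinv lab x.out α.1 ((δ α.1 y.out : Γ) • β.1)]
          congr 1
          have hspec : (δ α.1 y.out : Γ) • y.out = α.1 := δ_spec (exists_out α.2)
          calc val (Γ := Γ) hT lab α.1 ((δ α.1 y.out : Γ) • β.1)
              = val (Γ := Γ) hT lab ((δ α.1 y.out : Γ) • y.out) ((δ α.1 y.out : Γ) • β.1) := by
                rw [hspec]
            _ = val (Γ := Γ) hT lab y.out β.1 := val_smul (Γ := Γ) hT hadj lab _ _ _ }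
    refine ⟨F, ?_, ?_⟩
    · rintro a b ⟨E, hsel, h1, h2⟩
      show val (Γ := Γ) hT lab a.out ((δ a.out E.1.1 : Γ) • E.1.2) = _
      have hb : (δ a.out E.1.1 : Γ) • E.1.1 = a.out :=
        δ_spec (exists_smul_of_mk_eq (by exact (mk_out _).trans h1.symm))
      calc val (Γ := Γ) hT lab a.out ((δ a.out E.1.1 : Γ) • E.1.2)
          = val (Γ := Γ) hT lab ((δ a.out E.1.1 : Γ) • E.1.1) ((δ a.out E.1.1 : Γ) • E.1.2) := by
            rw [hb]
        _ = val (Γ := Γ) hT lab E.1.1 E.1.2 := val_smul (Γ := Γ) hT hadj lab _ _ _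
        _ = cc (Γ := Γ) lab ⟨(E.1.1, E.1.2), E.2⟩ := val_adj (Γ := Γ) hT lab E.2
        _ = lab E := cc_sel lab hsel
        _ = f ⟨E, hsel, h1, h2⟩ := (hlab E hsel h1 h2).symm
    · intro Fun hFun
      have hedgeF : ∀ (u u' : V) (h : T.Adj u u') (x y : Ob Γ V) (hx : mk u = x)
          (hy : mk u' = y), Fun.map (mor u u' hx hy) = cc (Γ := Γ) lab ⟨(u, u'), h⟩ := by
        intro u u' h x y hx hy
        set E : Ed T := ⟨(u, u'), h⟩ with hE
        set R : Ed T := rep (Γ := Γ) E with hR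
        rcases rep_rel (Γ := Γ) E with ⟨b, ⟨hb1, hb2⟩ | ⟨hb1, hb2⟩⟩
        · -- positive orientation
          have h1 : (mk R.1.1 : Ob Γ V) = x := by rw [← mk_smul b R.1.1, hb1, hx]
          have h2 : (mk R.1.2 : Ob Γ V) = y := by rw [← mk_smul b R.1.2, hb2, hy]
          rw [mor_eq_ofArr hfree (sel_rep E) hb1 hb2 hx hy h1 h2]
          have := hFun x y ⟨R, sel_rep E, h1, h2⟩
          rw [this, hlab R (sel_rep E) h1 h2]
          have hp : Pos Γ E := ⟨b, hb1, hb2⟩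
          rw [cc, if_pos hp]
        · -- negative orientation
          have h1 : (mk R.1.1 : Ob Γ V) = y := by rw [← mk_smul b R.1.1, hb1, hy]
          have h2 : (mk R.1.2 : Ob Γ V) = x := by rw [← mk_smul b R.1.2, hb2, hx]
          have hco := ofArr_comp_mor hfree (sel_rep E) hb1 hb2 hx hy h1 h2
          have h5 : Fun.map (ofArr ⟨R, sel_rep E, h1, h2⟩ ≫ mor u u' hx hy)
              = Fun.map (𝟙 y) := congrArg Fun.map hco
          erw [CategoryTheory.Functor.map_comp, CategoryTheory.Functor.map_id, SingleObj.comp_as_mul,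
            SingleObj.id_as_one] at h5
          have h6 : Fun.map (mor u u' hx hy) = (Fun.map (ofArr ⟨R, sel_rep E, h1, h2⟩))⁻¹ :=
            eq_inv_of_mul_eq_one_left h5
          rw [h6, hFun y x ⟨R, sel_rep E, h1, h2⟩, hlab R (sel_rep E) h1 h2]
          have hpos : Pos Γ (Ed.swap E) := by
            refine ⟨b, ?_, ?_⟩ <;> rw [rep_swap] <;> [exact hb1; exact hb2]
          rw [cc, if_neg ((pos_swap_iff hnoinv E).1 hpos)]
      have hwalk : ∀ (u w : V) (p : T.Walk u w) (x y : Ob Γ V) (hx : mk u = x)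
          (hy : mk w = y), Fun.map (mor u w hx hy) = valW (Γ := Γ) lab p := by
        intro u w p
        induction p with
        | nil =>
          intro x y hx hy
          have hxy : x = y := hx.symm.trans hy
          subst hxy
          rw [mor_self hfree hx hy]
          show Fun.map (𝟙 x) = _
          rw [CategoryTheory.Functor.map_id]
          rfl
        | @cons u₀ u₁ w₀ h p ih =>
          intro x y hx hy
          have hcomp := mor_comp hfree hx (rfl : mk u₁ = mk u₁) hy
          rw [← hcomp]
          show Fun.map (mor u₀ u₁ hx rfl ≫ mor u₁ w₀ rfl hy) = _
          erw [CategoryTheory.Functor.map_comp, SingleObj.comp_as_mul,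
            ih _ _ rfl hy, hedgeF u₀ u₁ h x _ hx rfl]
          rfl
      apply CategoryTheory.Functor.hext
      · intro x; rfl
      · intro x y g
        apply heq_of_eq
        have h1 := hwalk x.out g.1 (geod hT x.out g.1) x y (mk_out x) g.2
        rw [mor_eq_self hfree g] at h1
        exact h1
  haveI : Nonempty (Ob Γ V) := ⟨mk (Classical.arbitrary V (h := hT.isConnected.nonempty))⟩
  haveI : IsConnected (Ob Γ V) :=
    zigzag_isConnected fun x y =>
      Relation.ReflTransGen.single (Or.inl ⟨(⟨y.out, mk_out y⟩ : Mor x y)⟩)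
  let x₀ : Ob Γ V := Classical.arbitrary _
  haveI hfg : IsFreeGroup (CategoryTheory.End x₀) :=
    IsFreeGroupoid.endIsFreeOfConnectedFree x₀
  let φ : Γ →* CategoryTheory.End x₀ :=
    MonoidHom.mk' (fun b => (⟨b⁻¹ • x₀.out, by rw [mk_smul, mk_out]⟩ : Mor x₀ x₀))
      (by
        intro b₁ b₂
        apply Subtype.ext
        show (b₁ * b₂)⁻¹ • x₀.out
            = (δ (b₂⁻¹ • x₀.out) x₀.out : Γ) • (b₁⁻¹ • x₀.out)
        rw [δ_smul hfree, ← mul_smul, mul_inv_rev])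
  have hbij : Function.Bijective φ := by
    constructor
    · intro b b' hbb
      have : b⁻¹ • x₀.out = b'⁻¹ • x₀.out := congrArg Subtype.val hbb
      have := smul_cancel hfree this
      exact inv_injective this
    · intro α
      refine ⟨(δ α.1 x₀.out : Γ)⁻¹, Subtype.ext ?_⟩
      show ((δ α.1 x₀.out : Γ)⁻¹)⁻¹ • x₀.out = α.1
      rw [inv_inv]
      exact δ_spec (exists_out α.2)
  exact IsFreeGroup.ofMulEquiv (MulEquiv.ofBijective φ hbij).symm

/-- Let a group `G` act on a tree `T` (by graph automorphisms, without edge inversions)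
with infinite cyclic vertex stabilizers such that each edge stabilizer has finite index
in the stabilizers of both endpoints.  Fix a vertex `v` whose stabilizer is `⟨a⟩ ≅ ℤ`.
If `B ≤ G` is a subgroup that is not free, then `B ∩ ⟨a⟩ ≠ {1}`. -/
theorem nonfree_subgroup_meets_vertex_group {V G : Type*} [Group G] [MulAction G V]
    (T : SimpleGraph V) (hT : T.IsTree)
    (hadj : ∀ (g : G) (u v : V), T.Adj u v → T.Adj (g • u) (g • v))
    (hnoinv : ∀ (g : G) (u v : V), T.Adj u v → ¬(g • u = v ∧ g • v = u))
    (hvert : ∀ u : V, ∃ x : G, ¬IsOfFinOrder x ∧ MulAction.stabilizer G u = Subgroup.zpowers x)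
    (hedge : ∀ u w : V, T.Adj u w →
      (MulAction.stabilizer G u ⊓ MulAction.stabilizer G w).relIndex
        (MulAction.stabilizer G u) ≠ 0 ∧
      (MulAction.stabilizer G u ⊓ MulAction.stabilizer G w).relIndex
        (MulAction.stabilizer G w) ≠ 0)
    (v : V) (a : G) (hnf : ¬IsOfFinOrder a)
    (ha : MulAction.stabilizer G v = Subgroup.zpowers a)
    (B : Subgroup G) (hB : ¬IsFreeGroup ↥B) :
    B ⊓ Subgroup.zpowers a ≠ ⊥ := by
  intro hbot
  apply hB
  have hfreeB : ∀ (u : V) (g : ↥B), g • u = u → g = 1 := by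
    intro u b hb
    by_contra hne
    have hbG : (b : G) • u = u := hb
    have hb1 : (b : G) ≠ 1 := fun h => hne (OneMemClass.coe_eq_one.mp h)
    obtain ⟨p⟩ := hT.isConnected.preconnected u v
    obtain ⟨d, hdB, hds, hd1⟩ := aux_walk T hvert hedge B p (b : G) b.2 hbG hb1
    have hmem : d ∈ B ⊓ Subgroup.zpowers a := ⟨hdB, ha ▸ hds⟩
    rw [hbot] at hmem
    exact hd1 (Subgroup.mem_bot.mp hmem)
  exact isFreeGroup_of_free_action (Γ := ↥B) T hT
    (fun g u w h => hadj (g : G) u w h)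
    (fun g u w h => hnoinv (g : G) u w h)
    hfreeB
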